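/- Over the field k, the ideal I of 2×2 minors of the matrix with rows (x_0, x_1, 0, x_2) and (0, x_0, x_1, x_3) in S = k[x_0,…,x_4] is not linearly presented: the minimal free resolution of I has a first syzygy of degree > 3, i.e., Tor_1^S(I,k) is not concentrated in degree 3. -/

import Mathlib

open MvPolynomial

/-- The map `S^n → S` sending the standard basis to the family `g`. -/
noncomputable def freeToIdeal {S : Type} [CommRing S] {n : ℕ} (g : Fin n → S) :
    (Fin n → S) →ₗ[S] S where
  toFun c := ∑ i, c i * g i
  map_add' a b := by
    simp [add_mul, Finset.sum_add_distrib]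
  map_smul' c a := by
    simp [Finset.mul_sum, smul_eq_mul, mul_assoc]

lemma aux_totalDegree_aeval_le {k : Type} [CommSemiring k] {n : ℕ}
    (v : Fin n → MvPolynomial (Fin n) k) (hv : ∀ i, (v i).totalDegree ≤ 1)
    (p : MvPolynomial (Fin n) k) : (aeval v p).totalDegree ≤ p.totalDegree := by
  conv_lhs => rw [p.as_sum]
  rw [map_sum]
  refine (totalDegree_finset_sum _ _).trans (Finset.sup_le fun m hm => ?_)
  rw [aeval_monomial]
  refine (totalDegree_mul _ _).trans ?_
  have h1 : ((algebraMap k (MvPolynomial (Fin n) k)) (coeff m p)).totalDegree = 0 := by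
    rw [MvPolynomial.algebraMap_eq]; exact totalDegree_C _
  rw [h1, zero_add]
  refine (totalDegree_finset_prod _ _).trans ?_
  calc ∑ i ∈ m.support, (v i ^ m i).totalDegree
      ≤ ∑ i ∈ m.support, m i * 1 := by
        refine Finset.sum_le_sum fun i _ => ?_
        exact (totalDegree_pow _ _).trans (Nat.mul_le_mul_left _ (hv i))
    _ = m.sum fun _ e => e := by simp [Finsupp.sum]
    _ ≤ p.totalDegree := le_totalDegree hm

lemma aux_final {k : Type} [Field k] {p q : MvPolynomial (Fin 5) k}
    (hp : p.totalDegree ≤ 1)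
    (h : p * X 3 * X 3 = q * X 2 * X 2) : p = 0 := by
  by_contra h0
  obtain ⟨m, hm⟩ := MvPolynomial.support_nonempty.mpr h0
  have hm2 : m 2 ≤ 1 := by
    have hsum : m 2 ≤ m.sum fun _ e => e := by
      classical
      by_cases h2 : 2 ∈ m.support
      · exact Finset.single_le_sum (fun i _ => Nat.zero_le _) h2
      · simp [Finsupp.notMem_support_iff.mp h2]
    exact hsum.trans ((le_totalDegree hm).trans hp)
  have hL : coeff (m + Finsupp.single 3 1 + Finsupp.single 3 1) (p * X 3 * X 3)
      = coeff m p := by rw [coeff_mul_X, coeff_mul_X]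
  have hR : coeff (m + Finsupp.single 3 1 + Finsupp.single 3 1) (q * X 2 * X 2) = 0 := by
    rw [coeff_mul_X']
    split_ifs with h2
    · rw [coeff_mul_X']
      split_ifs with h2'
      · exfalso
        have hv := Finsupp.mem_support_iff.mp h2'
        simp only [Finsupp.coe_tsub, Pi.sub_apply, Finsupp.coe_add, Pi.add_apply,
          Finsupp.single_eq_same,
          Finsupp.single_eq_of_ne' (show (3 : Fin 5) ≠ 2 by decide)] at hv
        omega
      · rfl
    · rfl
  rw [h, hR] at hL
  exact (Finsupp.mem_support_iff.mp hm) hL.symm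

lemma aux_key {k : Type} [Field k] (c : Fin 6 → MvPolynomial (Fin 5) k)
    (hker : c 0 * (X 0 * X 0) + c 1 * (X 0 * X 1) + c 2 * (X 0 * X 3)
      + c 3 * (X 1 * X 1) + c 4 * (X 1 * X 3 - X 0 * X 2)
      + c 5 * (-(X 1 * X 2)) = 0)
    (hdeg : ∀ i, (c i).totalDegree ≤ 1) :
    aeval ![(0 : MvPolynomial (Fin 5) k), 0, X 2, X 3, X 4] (c 2) = 0 := by
  set f1 : MvPolynomial (Fin 5) k →ₐ[k] MvPolynomial (Fin 5) k :=
    aeval ![X 0, 0, X 2, X 3, X 4] with hf1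
  set f2 : MvPolynomial (Fin 5) k →ₐ[k] MvPolynomial (Fin 5) k :=
    aeval ![0, X 1, X 2, X 3, X 4] with hf2
  set σ : MvPolynomial (Fin 5) k →ₐ[k] MvPolynomial (Fin 5) k :=
    aeval ![0, 0, X 2, X 3, X 4] with hσ
  have hcomp12 : ∀ p : MvPolynomial (Fin 5) k, f2 (f1 p) = σ p := by
    intro p
    rw [← AlgHom.comp_apply, hf1, comp_aeval, hσ]
    have hv : (fun i => f2 (![X 0, 0, X 2, X 3, X 4] i))
        = ![(0 : MvPolynomial (Fin 5) k), 0, X 2, X 3, X 4] := by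
      funext i
      fin_cases i <;> simp [hf2]
    rw [hv]
  have hcomp21 : ∀ p : MvPolynomial (Fin 5) k, f1 (f2 p) = σ p := by
    intro p
    rw [← AlgHom.comp_apply, hf2, comp_aeval, hσ]
    have hv : (fun i => f1 (![0, X 1, X 2, X 3, X 4] i))
        = ![(0 : MvPolynomial (Fin 5) k), 0, X 2, X 3, X 4] := by
      funext i
      fin_cases i <;> simp [hf1]
    rw [hv]
  -- slice 1: set x1 = 0
  have h1 := congrArg f1 hker
  simp only [map_add, map_mul, map_sub, map_neg, map_zero, hf1, aeval_X,
    Matrix.cons_val_zero, Matrix.cons_val_one, Matrix.head_cons,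
    Matrix.cons_val_two, Matrix.tail_cons, Matrix.cons_val_three,
    Matrix.cons_val_four, Matrix.cons_val_fin_one, mul_zero, zero_mul,
    add_zero, zero_add, neg_zero, sub_zero, zero_sub] at h1
  have hX0 : X 0 * (f1 (c 0) * X 0 + f1 (c 2) * X 3 - f1 (c 4) * X 2)
      = (0 : MvPolynomial (Fin 5) k) := by
    rw [hf1]; linear_combination h1
  have h1' : f1 (c 0) * X 0 + f1 (c 2) * X 3 - f1 (c 4) * X 2 = 0 := by
    rcases mul_eq_zero.mp hX0 with h | h
    · exact absurd h (X_ne_zero 0)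
    · exact h
  -- slice 2: set x0 = 0
  have h2 := congrArg f2 hker
  simp only [map_add, map_mul, map_sub, map_neg, map_zero, hf2, aeval_X,
    Matrix.cons_val_zero, Matrix.cons_val_one, Matrix.head_cons,
    Matrix.cons_val_two, Matrix.tail_cons, Matrix.cons_val_three,
    Matrix.cons_val_four, Matrix.cons_val_fin_one, mul_zero, zero_mul,
    add_zero, zero_add, neg_zero, sub_zero, zero_sub] at h2
  have hX1 : X 1 * (f2 (c 3) * X 1 + f2 (c 4) * X 3 - f2 (c 5) * X 2)
      = (0 : MvPolynomial (Fin 5) k) := by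
    rw [hf2]; linear_combination h2
  have h2' : f2 (c 3) * X 1 + f2 (c 4) * X 3 - f2 (c 5) * X 2 = 0 := by
    rcases mul_eq_zero.mp hX1 with h | h
    · exact absurd h (X_ne_zero 1)
    · exact h
  -- apply the other substitution
  have hA := congrArg f2 h1'
  simp only [map_add, map_mul, map_sub, map_zero, hcomp12] at hA
  have hA' : σ (c 2) * X 3 - σ (c 4) * X 2 = 0 := by
    have e0 : f2 (X 0) = 0 := by rw [hf2]; simp
    have e2 : f2 (X 2) = X 2 := by rw [hf2]; simp
    have e3 : f2 (X 3) = X 3 := by rw [hf2]; simp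
    rw [e0, e2, e3] at hA
    linear_combination hA
  have hB := congrArg f1 h2'
  simp only [map_add, map_mul, map_sub, map_zero, hcomp21] at hB
  have hB' : σ (c 4) * X 3 - σ (c 5) * X 2 = 0 := by
    have e1 : f1 (X 1) = 0 := by rw [hf1]; simp
    have e2 : f1 (X 2) = X 2 := by rw [hf1]; simp
    have e3 : f1 (X 3) = X 3 := by rw [hf1]; simp
    rw [e1, e2, e3] at hB
    linear_combination hB
  have hAB : σ (c 2) * X 3 * X 3 = σ (c 5) * X 2 * X 2 := by
    linear_combination X 3 * hA' + X 2 * hB'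
  have hdeg2 : (σ (c 2)).totalDegree ≤ 1 := by
    rw [hσ]
    refine (aux_totalDegree_aeval_le _ ?_ _).trans (hdeg 2)
    intro i
    fin_cases i <;> simp [totalDegree_X]
  exact aux_final hdeg2 hAB

theorem statement_19 (k : Type) [Field k] :
    letI S := MvPolynomial (Fin 5) k
    letI g : Fin 6 → S :=
      ![X 0 * X 0, X 0 * X 1, X 0 * X 3, X 1 * X 1, X 1 * X 3 - X 0 * X 2, -(X 1 * X 2)]
    letI φ : (Fin 6 → S) →ₗ[S] S := freeToIdeal g
    Submodule.span S {c : Fin 6 → S | c ∈ LinearMap.ker φ ∧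
        ∀ i, (c i).totalDegree ≤ 1}
      ≠ LinearMap.ker φ := by
  intro heq
  set S := MvPolynomial (Fin 5) k with hS
  set g : Fin 6 → S :=
    ![X 0 * X 0, X 0 * X 1, X 0 * X 3, X 1 * X 1, X 1 * X 3 - X 0 * X 2, -(X 1 * X 2)] with hg
  set φ : (Fin 6 → S) →ₗ[S] S := freeToIdeal g with hφ
  set σ : S →ₐ[k] S := aeval ![0, 0, X 2, X 3, X 4] with hσ
  set wit : Fin 6 → S := ![0, 0, X 2 * X 2, 0, X 2 * X 3, X 3 * X 3] with hwitdef
  have hwit : φ wit = 0 := by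
    show ∑ i, wit i * g i = 0
    rw [Fin.sum_univ_six]
    show (0 : S) * (X 0 * X 0) + 0 * (X 0 * X 1) + (X 2 * X 2) * (X 0 * X 3)
      + 0 * (X 1 * X 1) + (X 2 * X 3) * (X 1 * X 3 - X 0 * X 2)
      + (X 3 * X 3) * (-(X 1 * X 2)) = 0
    ring
  have hmem : wit ∈ Submodule.span S {c : Fin 6 → S | c ∈ LinearMap.ker φ ∧
      ∀ i, (c i).totalDegree ≤ 1} := by
    rw [heq]
    exact LinearMap.mem_ker.mpr hwit
  set N : Submodule S (Fin 6 → S) :=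
    Submodule.comap (LinearMap.proj 2 : (Fin 6 → S) →ₗ[S] S)
      (RingHom.ker σ.toRingHom) with hN
  have hsub : Submodule.span S {c : Fin 6 → S | c ∈ LinearMap.ker φ ∧
      ∀ i, (c i).totalDegree ≤ 1} ≤ N := by
    rw [Submodule.span_le]
    rintro c ⟨hc1, hc2⟩
    have hker : ∑ i, c i * g i = 0 := hc1
    rw [Fin.sum_univ_six] at hker
    have hker' : c 0 * (X 0 * X 0) + c 1 * (X 0 * X 1) + c 2 * (X 0 * X 3)
        + c 3 * (X 1 * X 1) + c 4 * (X 1 * X 3 - X 0 * X 2)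
        + c 5 * (-(X 1 * X 2)) = 0 := hker
    have hk := aux_key c hker' hc2
    simp only [hN, Submodule.mem_comap, LinearMap.proj_apply, SetLike.mem_coe]
    rw [RingHom.mem_ker]
    exact hk
  have hwN : wit ∈ N := hsub hmem
  simp only [hN, Submodule.mem_comap, LinearMap.proj_apply] at hwN
  rw [RingHom.mem_ker] at hwN
  have h2 : wit 2 = X 2 * X 2 := rfl
  rw [h2] at hwN
  have : σ (X 2 * X 2) = X 2 * X 2 := by
    rw [hσ]
    have e2 : (aeval ![0, 0, X 2, X 3, X 4] : S →ₐ[k] S) (X 2) = X 2 := by simp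
    rw [map_mul, e2]
  rw [show (σ.toRingHom : S → S) (X 2 * X 2) = σ (X 2 * X 2) from rfl, this] at hwN
  exact (mul_ne_zero (X_ne_zero 2) (X_ne_zero 2)) hwN
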